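/- For a positive integer p and complex numbers c, d with 1-c not a non-positive integer and the Gamma factors defined, Σ_{k=0}^{p-1} (-1)^k C(p-1,k) (1-d)_{k+1}/(1-c)_{k+1} = − Γ(d)Γ(d-c+p-1) / (Γ(d-1)Γ(d-c)(1-c)_p). -/

import Mathlib

open Complex Finset

/-- Pochhammer symbol `(a)_k`. -/
noncomputable def poch (a : ℂ) (k : ℕ) : ℂ := ∏ i ∈ Finset.range k, (a + i)

/-- Digamma function `ψ = Γ'/Γ`. -/
noncomputable def digamma (z : ℂ) : ℂ := deriv Complex.Gamma z / Complex.Gamma z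

/-- Generalized binomial coefficient `C(x,k) = x(x-1)⋯(x-k+1)/k!`. -/
noncomputable def gbinom (x : ℂ) (k : ℕ) : ℂ :=
  (∏ i ∈ Finset.range k, (x - i)) / (Nat.factorial k : ℂ)


lemma poch_succ (x : ℂ) (n : ℕ) : poch x (n+1) = poch x n * (x + n) := by
  simp [poch, Finset.prod_range_succ]

lemma poch_succ' (x : ℂ) (n : ℕ) : poch x (n+1) = x * poch (x+1) n := by
  induction n with
  | zero => simp [poch]
  | succ n ih =>
    rw [poch_succ, ih, poch_succ (x+1)]
    push_cast; ring

lemma poch_add (x : ℂ) (m n : ℕ) :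
    poch x (m+n) = poch x m * ∏ i ∈ Finset.range n, (x + m + i) := by
  rw [poch, Finset.prod_range_add]
  congr 1
  apply Finset.prod_congr rfl; intro i _; push_cast; ring

lemma poch_ne_zero (x : ℂ) (hx : ∀ m : ℕ, x ≠ -m) (n : ℕ) : poch x n ≠ 0 := by
  apply Finset.prod_ne_zero_iff.2
  intro i _
  intro h
  exact hx i (by linear_combination h)

lemma key (n : ℕ) (a : ℂ) : ∀ b : ℂ,
    ∑ k ∈ Finset.range (n+1), (-1:ℂ)^k * (n.choose k) * poch a k *
      ∏ i ∈ Finset.range (n-k), (b + k + i) = poch (b - a) n := by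
  induction n with
  | zero => intro b; simp [poch]
  | succ n ih =>
    intro b
    have hQ : ∀ k : ℕ, k ≤ n → (∏ i ∈ Finset.range (n+1-k), (b + k + i))
        = (∏ i ∈ Finset.range (n-k), (b + 1 + k + i)) * (b + k) := by
      intro k hk
      rw [show n+1-k = (n-k)+1 by omega, Finset.prod_range_succ']
      congr 1
      · apply Finset.prod_congr rfl; intro i _; push_cast; ring
      · norm_num
    have expand : ∑ k ∈ Finset.range (n+2), (-1:ℂ)^k * ((n+1).choose k) * poch a k *
        ∏ i ∈ Finset.range (n+1-k), (b + k + i)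
        = (∑ k ∈ Finset.range (n+2), (-1:ℂ)^k * (n.choose k) * poch a k *
            ∏ i ∈ Finset.range (n+1-k), (b + k + i))
          + ∑ j ∈ Finset.range (n+1), -((-1:ℂ)^j * (n.choose j) * poch a (j+1) *
            ∏ i ∈ Finset.range (n-j), (b + (j+1:ℕ) + i)) := by
      rw [Finset.sum_range_succ' (fun k => (-1:ℂ)^k * ((n+1).choose k) * poch a k *
            ∏ i ∈ Finset.range (n+1-k), (b + k + i)),
          Finset.sum_range_succ' (fun k => (-1:ℂ)^k * (n.choose k) * poch a k *
            ∏ i ∈ Finset.range (n+1-k), (b + k + i)),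
          add_right_comm, ← Finset.sum_add_distrib]
      congr 1
      · apply Finset.sum_congr rfl
        intro j hj
        have : ((n+1).choose (j+1) : ℂ) = (n.choose j : ℂ) + (n.choose (j+1) : ℂ) := by
          rw [Nat.choose_succ_succ]; push_cast; ring
        rw [show n+1-(j+1) = n-j by omega]
        rw [this]
        ring
      · norm_num
    rw [expand]
    -- drop last term of first sum
    rw [Finset.sum_range_succ]
    rw [Nat.choose_succ_self]
    push_cast
    rw [mul_zero, zero_mul, zero_mul, add_zero]
    rw [← Finset.sum_add_distrib]
    have : ∀ k ∈ Finset.range (n+1), ((-1:ℂ)^k * (n.choose k) * poch a k *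
        ∏ i ∈ Finset.range (n+1-k), (b + k + i))
        + -((-1:ℂ)^k * (n.choose k) * poch a (k+1) *
            ∏ i ∈ Finset.range (n-k), (b + ((k:ℂ)+1) + i))
        = (b - a) * ((-1:ℂ)^k * (n.choose k) * poch a k *
            ∏ i ∈ Finset.range (n-k), ((b+1) + k + i)) := by
      intro k hk
      rw [Finset.mem_range] at hk
      rw [hQ k (by omega), poch_succ]
      have h2 : (∏ i ∈ Finset.range (n-k), (b + ((k:ℂ)+1) + i))
          = ∏ i ∈ Finset.range (n-k), ((b+1) + k + i) := by
        apply Finset.prod_congr rfl; intro i _; push_cast; ring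
      rw [h2]; ring
    rw [Finset.sum_congr rfl this, ← Finset.mul_sum, ih (b+1)]
    rw [show b + 1 - a = (b - a) + 1 by ring, ← poch_succ']

lemma Gamma_shift (z : ℂ) (hz : ∀ m : ℕ, z ≠ -m) (n : ℕ) :
    Complex.Gamma (z + n) = poch z n * Complex.Gamma z := by
  induction n with
  | zero => simp [poch]
  | succ n ih =>
    have h1 : z + ((n:ℕ)+1 : ℕ) = (z + n) + 1 := by push_cast; ring
    have h2 : z + (n:ℂ) ≠ 0 := fun h => hz n (by linear_combination h)
    rw [h1, Complex.Gamma_add_one _ h2, ih, poch_succ]; ring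

theorem stmt_3 (p : ℕ) (hp : 1 ≤ p) (c d : ℂ)
    (hc : ∀ m : ℕ, 1 - c ≠ -(m : ℂ))
    (hd1 : ∀ m : ℕ, d ≠ -(m : ℂ)) (hd2 : ∀ m : ℕ, d - 1 ≠ -(m : ℂ))
    (hdc : ∀ m : ℕ, d - c ≠ -(m : ℂ)) (hdcp : ∀ m : ℕ, d - c + p - 1 ≠ -(m : ℂ)) :
    ∑ k ∈ Finset.range p,
        (-1 : ℂ) ^ k * (Nat.choose (p - 1) k : ℂ) * poch (1 - d) (k + 1) / poch (1 - c) (k + 1) =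
      -(Complex.Gamma d * Complex.Gamma (d - c + p - 1) /
        (Complex.Gamma (d - 1) * Complex.Gamma (d - c) * poch (1 - c) p)) := by
  obtain ⟨n, rfl⟩ : ∃ n, p = n + 1 := ⟨p - 1, by omega⟩
  have hn : (n+1) - 1 = n := rfl
  rw [hn]
  have hcp : poch (1-c) (n+1) ≠ 0 := poch_ne_zero _ hc _
  -- rewrite each term over common denominator poch (1-c) (n+1)
  have hterm : ∀ k ∈ Finset.range (n+1),
      (-1 : ℂ) ^ k * (Nat.choose n k : ℂ) * poch (1 - d) (k + 1) / poch (1 - c) (k + 1)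
      = ((1 - d) * ((-1:ℂ)^k * (n.choose k) * poch (2 - d) k *
          ∏ i ∈ Finset.range (n-k), ((2 - c) + k + i))) / poch (1-c) (n+1) := by
    intro k hk
    rw [Finset.mem_range] at hk
    have hsplit : poch (1-c) (n+1) = poch (1-c) (k+1) *
        ∏ i ∈ Finset.range (n-k), ((2-c) + k + i) := by
      rw [show n+1 = (k+1)+(n-k) by omega, poch_add]
      congr 1
      apply Finset.prod_congr rfl; intro i _; push_cast; ring
    have hck : poch (1-c) (k+1) ≠ 0 := poch_ne_zero _ hc _
    have hprod : (∏ i ∈ Finset.range (n-k), ((2-c) + k + i)) ≠ 0 := by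
      intro h
      rw [hsplit, h, mul_zero] at hcp
      exact hcp rfl
    rw [hsplit, poch_succ' (1-d) k, show (1-d)+1 = 2-d by ring,
      div_eq_div_iff hck (mul_ne_zero hck hprod)]
    ring
  rw [Finset.sum_congr rfl hterm, ← Finset.sum_div, ← Finset.mul_sum]
  have hk := key n (2-d) (2-c)
  rw [hk, show (2-c) - (2-d) = d - c by ring]
  -- now RHS
  have hGd : Complex.Gamma d = (d - 1) * Complex.Gamma (d - 1) := by
    have := Complex.Gamma_add_one (d-1) (hd2 0 ∘ (by intro h; rw [h]; norm_num))
    rw [show d - 1 + 1 = d by ring] at this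
    rw [this]
  have hGdc : Complex.Gamma (d - c + (n+1:ℕ) - 1) = poch (d-c) n * Complex.Gamma (d - c) := by
    rw [show d - c + ((n:ℕ)+1:ℕ) - 1 = (d - c) + (n:ℕ) by push_cast; ring]
    exact Gamma_shift _ hdc n
  rw [hGd, hGdc]
  have h1 : Complex.Gamma (d-1) ≠ 0 := Complex.Gamma_ne_zero hd2
  have h2 : Complex.Gamma (d-c) ≠ 0 := Complex.Gamma_ne_zero hdc
  field_simp
  ring
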